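/- Let F be the free semigroup on a nonempty alphabet A, and let X be a cyclic F-act, generated by an element x₀ ∈ X. Then there exists an F-act Y such that X is a subact of Y (i.e., X ⊆ Y, closed under the action, with the action of F on X the restriction of that on Y), Y \ X has exactly one element, and Y is a hopfian F-act. (Concretely, one may take Y = X ∪ {y₀} with y₀·a = x₀ for all a ∈ A.) -/

import Mathlib

/-- Every cyclic act `X` of a free semigroup embeds in an act `Y` such that the
complement of (the image of) `X` in `Y` has exactly one element and `Y` is hopfian. -/
theorem stmt_9 {A : Type} [Nonempty A] (X : Type)
    (act : X → FreeSemigroup A → X)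
    (hact : ∀ (x : X) (s t : FreeSemigroup A), act x (s * t) = act (act x s) t)
    (x₀ : X) (hcyc : ∀ x : X, x = x₀ ∨ ∃ s : FreeSemigroup A, x = act x₀ s) :
    ∃ (Y : Type) (actY : Y → FreeSemigroup A → Y) (i : X → Y),
      (∀ (y : Y) (s t : FreeSemigroup A), actY y (s * t) = actY (actY y s) t) ∧
      Function.Injective i ∧
      (∀ (x : X) (s : FreeSemigroup A), i (act x s) = actY (i x) s) ∧
      (∃ y₀ : Y, (Set.range i)ᶜ = {y₀}) ∧
      (∀ ψ : Y → Y, (∀ (y : Y) (s : FreeSemigroup A), ψ (actY y s) = actY (ψ y) s) →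
        Function.Surjective ψ → Function.Injective ψ) := by
  classical
  -- g s : where the new point is sent by s
  set g : FreeSemigroup A → X := fun s =>
    match s.tail with
    | [] => x₀
    | b :: m => act x₀ ⟨b, m⟩ with hg
  have hgmul : ∀ s t : FreeSemigroup A, g (s * t) = act (g s) t := by
    intro s t
    obtain ⟨a, l⟩ := s
    cases l with
    | nil =>
        show g (⟨a, [] ++ t.1 :: t.2⟩) = act x₀ t
        simp only [hg, List.nil_append]
    | cons b m =>
        show g (⟨a, (b :: m) ++ t.1 :: t.2⟩) = act (act x₀ ⟨b, m⟩) t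
        simp only [hg, List.cons_append]
        rw [← hact]
        rfl
  have hgsurj : ∀ x : X, ∃ s, g s = x := by
    intro x
    obtain a := Classical.arbitrary A
    rcases hcyc x with rfl | ⟨t, rfl⟩
    · exact ⟨FreeSemigroup.of a, rfl⟩
    · refine ⟨FreeSemigroup.of a * t, ?_⟩
      show (match ([] ++ t.1 :: t.2 : List A) with
        | [] => x₀ | b :: m => act x₀ ⟨b, m⟩) = act x₀ t
      simp only [List.nil_append]
  refine ⟨Option X, fun y s => some (y.elim (g s) (fun x => act x s)), some, ?_, ?_, ?_, ?_, ?_⟩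
  · rintro (_ | x) s t
    · simpa using hgmul s t
    · simpa using hact x s t
  · exact Option.some_injective X
  · intro x s; rfl
  · refine ⟨none, ?_⟩
    ext y
    cases y with
    | none => simp
    | some x => simp
  · intro ψ hψ hsurj
    -- ψ none = none
    have hnone : ∀ y, ψ y = none → y = none := by
      intro y hy
      cases y with
      | none => rfl
      | some x =>
          exfalso
          rcases hgsurj x with ⟨s, rfl⟩
          have := hψ none s
          simp only [Option.elim] at this
          rw [hy] at this
          exact Option.some_ne_none _ this.symm
    have hψnone : ψ none = none := by
      obtain ⟨y, hy⟩ := hsurj none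
      rw [hnone y hy] at hy; exact hy
    have hfix : ∀ y, ψ y = y := by
      intro y
      cases y with
      | none => exact hψnone
      | some x =>
          rcases hgsurj x with ⟨s, rfl⟩
          have := hψ none s
          rw [hψnone] at this
          simpa using this
    intro a b hab
    rw [hfix a, hfix b] at hab
    exact hab
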